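/- Suppose x_k in (-1,1) is a zero of R_{n-1}(x) = (1/sqrt(a^2+1))( sqrt(a^2+1) x U_{n-2}(x) + a T_{n-1}(x) ) with a > 0 and n >= 2. Then Q_n(x_k) = ((a + i x_k)/a) * U_{n-2}(x_k), and moreover |Q_n(x_k)| = 1, so that U_{n-2}(x_k)^2 = a^2/(a^2 + x_k^2), where Q_n(z) = (1/sqrt(a^2+1))( -(az+i) T_{n-1}(z) + sqrt(a^2+1)(1-z^2) U_{n-2}(z) ). -/

import Mathlib

open Polynomial

set_option maxHeartbeats 1000000 in
/-- At a zero `x_k ∈ (-1,1)` of `R_{n-1}`, the polynomial `Q_n` takes the value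
`((a + i x_k)/a) U_{n-2}(x_k)`, has modulus `1`, and `U_{n-2}(x_k)² = a²/(a² + x_k²)`. -/
theorem stmt19 (a : ℝ) (ha : 0 < a) (n : ℕ) (hn : 2 ≤ n) (xk : ℝ)
    (hxk : xk ∈ Set.Ioo (-1 : ℝ) 1)
    (hzero : (1 / Real.sqrt (a ^ 2 + 1)) *
        (Real.sqrt (a ^ 2 + 1) * xk * (Polynomial.Chebyshev.U ℝ ((n : ℤ) - 2)).eval xk +
          a * (Polynomial.Chebyshev.T ℝ ((n : ℤ) - 1)).eval xk) = 0) :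
    (1 / (Real.sqrt (a ^ 2 + 1) : ℂ)) *
        (-((a : ℂ) * (xk : ℂ) + Complex.I) *
            (Polynomial.Chebyshev.T ℂ ((n : ℤ) - 1)).eval (xk : ℂ) +
          (Real.sqrt (a ^ 2 + 1) : ℂ) * (1 - (xk : ℂ) ^ 2) *
            (Polynomial.Chebyshev.U ℂ ((n : ℤ) - 2)).eval (xk : ℂ)) =
      (((a : ℂ) + Complex.I * (xk : ℂ)) / (a : ℂ)) *
        (Polynomial.Chebyshev.U ℂ ((n : ℤ) - 2)).eval (xk : ℂ) ∧
    ‖((1 / (Real.sqrt (a ^ 2 + 1) : ℂ)) *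
        (-((a : ℂ) * (xk : ℂ) + Complex.I) *
            (Polynomial.Chebyshev.T ℂ ((n : ℤ) - 1)).eval (xk : ℂ) +
          (Real.sqrt (a ^ 2 + 1) : ℂ) * (1 - (xk : ℂ) ^ 2) *
            (Polynomial.Chebyshev.U ℂ ((n : ℤ) - 2)).eval (xk : ℂ)))‖ = 1 ∧
    ((Polynomial.Chebyshev.U ℝ ((n : ℤ) - 2)).eval xk) ^ 2 = a ^ 2 / (a ^ 2 + xk ^ 2) := by
  obtain ⟨hx1, hx2⟩ := hxk
  set s : ℝ := Real.sqrt (a ^ 2 + 1) with hs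
  have hs2 : s ^ 2 = a ^ 2 + 1 := Real.sq_sqrt (by positivity)
  have hs0 : 0 < s := Real.sqrt_pos.mpr (by positivity)
  set T : ℝ := (Polynomial.Chebyshev.T ℝ ((n : ℤ) - 1)).eval xk with hT
  set U : ℝ := (Polynomial.Chebyshev.U ℝ ((n : ℤ) - 2)).eval xk with hU
  have h1 : s * xk * U + a * T = 0 := by
    have := hzero
    field_simp at this
    linarith [this]
  -- Pell identity at xk
  set θ : ℝ := Real.arccos xk with hθ
  have hcos : Real.cos θ = xk := Real.cos_arccos hx1.le hx2.le
  have hTθ : T = Real.cos (((n : ℝ) - 1) * θ) := by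
    rw [hT, ← hcos, Polynomial.Chebyshev.T_real_cos]
    norm_num
  have hUθ : U * Real.sin θ = Real.sin (((n : ℝ) - 1) * θ) := by
    rw [hU, ← hcos, Polynomial.Chebyshev.U_real_cos]
    push_cast
    ring_nf
  have hsinsq : Real.sin θ ^ 2 = 1 - xk ^ 2 := by
    have := Real.sin_sq_add_cos_sq θ
    rw [hcos] at this; linarith
  have hpell : T ^ 2 + (1 - xk ^ 2) * U ^ 2 = 1 := by
    have h2 : (U * Real.sin θ) ^ 2 = Real.sin (((n : ℝ) - 1) * θ) ^ 2 := by rw [hUθ]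
    have h4 := Real.sin_sq_add_cos_sq (((n : ℝ) - 1) * θ)
    calc T ^ 2 + (1 - xk ^ 2) * U ^ 2
        = Real.cos (((n : ℝ) - 1) * θ) ^ 2 + (U * Real.sin θ) ^ 2 := by
          rw [hTθ, ← hsinsq]; ring
      _ = 1 := by rw [h2]; linarith
  have ha2x : 0 < a ^ 2 + xk ^ 2 := by positivity
  -- third claim
  have hthird : U ^ 2 = a ^ 2 / (a ^ 2 + xk ^ 2) := by
    have haT : a * T = -(s * xk * U) := by linarith
    have hT2 : a ^ 2 * T ^ 2 = (a ^ 2 + 1) * xk ^ 2 * U ^ 2 := by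
      linear_combination (a * T - s * xk * U) * haT + xk ^ 2 * U ^ 2 * hs2
    rw [eq_div_iff (ne_of_gt ha2x)]
    nlinarith [hpell, hT2, sq_nonneg a]
  -- complex eval coercions
  have hTc : (Polynomial.Chebyshev.T ℂ ((n : ℤ) - 1)).eval (xk : ℂ) = (T : ℂ) := by
    rw [hT, ← Polynomial.Chebyshev.map_T Complex.ofRealHom ((n : ℤ) - 1),
      Polynomial.eval_map]
    exact Polynomial.eval₂_at_apply Complex.ofRealHom xk
  have hUc : (Polynomial.Chebyshev.U ℂ ((n : ℤ) - 2)).eval (xk : ℂ) = (U : ℂ) := by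
    rw [hU, ← Polynomial.Chebyshev.map_U Complex.ofRealHom ((n : ℤ) - 2),
      Polynomial.eval_map]
    exact Polynomial.eval₂_at_apply Complex.ofRealHom xk
  have h1C : (s : ℂ) * xk * U + a * T = 0 := by exact_mod_cast h1
  have hsC : (s : ℂ) ≠ 0 := by exact_mod_cast hs0.ne'
  have haC : (a : ℂ) ≠ 0 := by exact_mod_cast ha.ne'
  have hfirst : (1 / (s : ℂ)) *
        (-((a : ℂ) * (xk : ℂ) + Complex.I) * (T : ℂ) +
          (s : ℂ) * (1 - (xk : ℂ) ^ 2) * (U : ℂ)) =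
      (((a : ℂ) + Complex.I * (xk : ℂ)) / (a : ℂ)) * (U : ℂ) := by
    field_simp
    linear_combination (-(xk : ℂ) * a - Complex.I) * h1C
  refine ⟨by rw [hTc, hUc]; exact hfirst, ?_, hthird⟩
  rw [hTc, hUc, hfirst]
  have habs2 : ‖((((a : ℂ) + Complex.I * (xk : ℂ)) / (a : ℂ)) * (U : ℂ))‖ ^ 2
      = (a ^ 2 + xk ^ 2) / a ^ 2 * U ^ 2 := by
    rw [Complex.sq_norm, map_mul, map_div₀, Complex.normSq_ofReal, Complex.normSq_ofReal]
    have : (a : ℂ) + Complex.I * (xk : ℂ) = (a : ℂ) + (xk : ℂ) * Complex.I := by ring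
    rw [this, Complex.normSq_add_mul_I]
    ring
  have hone : ‖((((a : ℂ) + Complex.I * (xk : ℂ)) / (a : ℂ)) * (U : ℂ))‖ ^ 2 = 1 := by
    rw [habs2, hthird]
    field_simp
  have hnn := norm_nonneg ((((a : ℂ) + Complex.I * (xk : ℂ)) / (a : ℂ)) * (U : ℂ))
  nlinarith [hone, hnn]
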